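/- Let p : E ⥤ B and q : D ⥤ B be Grothendieck opfibrations and let G : E ⥤ D be a functor with G ⋙ q = p. Then the following are equivalent: (1) there exist a functor R : D ⥤ E and an adjunction G ⊣ R such that q sends every component of the counit of this adjunction to an isomorphism of B; (2) G sends strongly cocartesian morphisms of E to strongly cocartesian morphisms of D, and for every object b of B the functor induced by G on fiber categories E_b ⥤ D_b admits a right adjoint. -/

import Mathlib

open CategoryTheory Functor

universe v₁ v₂ v₃ u₁ u₂ u₃

variable {B : Type u₁} {E : Type u₂} {D : Type u₃}
  [Category.{v₁} B] [Category.{v₂} E] [Category.{v₃} D]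

/-- A functor `G : E ⥤ D` with `G ⋙ q = p` restricts to a functor on fiber categories
`E_b ⥤ D_b` for every `b : B`. -/
def fiberFunctorOfEq {p : E ⥤ B} {q : D ⥤ B} (G : E ⥤ D) (hG : G ⋙ q = p) (b : B) :
    p.Fiber b ⥤ q.Fiber b :=
  Fiber.inducedFunctor (F := Fiber.fiberInclusion ⋙ G)
    (by rw [Functor.assoc, hG]; exact Fiber.fiberInclusion_comp_eq_const)

namespace RelAdjAux

open CategoryTheory.IsHomLift CategoryTheory.Category

section TCrit

variable {C₁ : Type*} {C₂ : Type*} [Category C₁] [Category C₂]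
  (F : C₁ ⥤ C₂) (Robj : C₂ → C₁) (ε : ∀ Y : C₂, F.obj (Robj Y) ⟶ Y)
  (hbij : ∀ X Y, Function.Bijective (fun χ : X ⟶ Robj Y => F.map χ ≫ ε Y))

/-- The hom-equivalence induced by a pointwise counit with bijective composition. -/
noncomputable def tEquiv : ∀ (X : C₁) (Y : C₂), (F.obj X ⟶ Y) ≃ (X ⟶ Robj Y) :=
  fun X Y => (Equiv.ofBijective _ (hbij X Y)).symm

lemma tEquiv_apply_spec {X : C₁} {Y : C₂} (g : F.obj X ⟶ Y) :
    F.map (tEquiv F Robj ε hbij X Y g) ≫ ε Y = g :=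
  (Equiv.ofBijective _ (hbij X Y)).apply_symm_apply g

lemma tEquiv_he : ∀ (X' X : C₁) (Y : C₂) (f : X' ⟶ X) (g : F.obj X ⟶ Y),
    tEquiv F Robj ε hbij X' Y (F.map f ≫ g) = f ≫ tEquiv F Robj ε hbij X Y g := by
  intro X' X Y f g
  apply (hbij X' Y).injective
  show F.map _ ≫ ε Y = F.map _ ≫ ε Y
  rw [tEquiv_apply_spec, F.map_comp, assoc, tEquiv_apply_spec]

/-- The adjunction induced by a pointwise counit with bijective composition. -/
noncomputable def tAdj : F ⊣ Adjunction.rightAdjointOfEquiv (G_obj := Robj)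
    (tEquiv F Robj ε hbij) (tEquiv_he F Robj ε hbij) :=
  Adjunction.adjunctionOfEquivRight _ _

lemma tAdj_counit (Y : C₂) : (tAdj F Robj ε hbij).counit.app Y = ε Y := by
  have h : (tAdj F Robj ε hbij).counit.app Y =
      (tEquiv F Robj ε hbij (Robj Y) Y).symm (𝟙 (Robj Y)) := by
    simp [tAdj, Adjunction.adjunctionOfEquivRight_counit_app]
  rw [h]
  show F.map (𝟙 (Robj Y)) ≫ ε Y = ε Y
  rw [F.map_id, id_comp]

end TCrit

variable (q : D ⥤ B) (G : E ⥤ D)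

lemma isHomLift_map {a b : B} {x y : E} (f : a ⟶ b) (φ : x ⟶ y)
    [(G ⋙ q).IsHomLift f φ] : q.IsHomLift f (G.map φ) := by
  subst_hom_lift (G ⋙ q) f φ
  exact inferInstanceAs (q.IsHomLift (q.map (G.map φ)) (G.map φ))

lemma map_homEquiv_comp_counit {R : D ⥤ E} (adj : G ⊣ R) {x : E} {z : D} (ψ : G.obj x ⟶ z) :
    G.map (adj.homEquiv x z ψ) ≫ adj.counit.app z = ψ := by
  have h := adj.homEquiv_counit (X := x) (Y := z) (g := adj.homEquiv x z ψ)
  rw [Equiv.symm_apply_apply] at h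
  exact h.symm

lemma preserves_scc (R : D ⥤ E) (adj : G ⊣ R)
    (hc : ∀ d : D, IsIso (q.map (adj.counit.app d)))
    {x y : E} {a b : B} (f : a ⟶ b) (φ : x ⟶ y)
    (hφ : (G ⋙ q).IsStronglyCocartesian f φ) : q.IsStronglyCocartesian f (G.map φ) := by
  haveI := hφ
  subst_hom_lift (G ⋙ q) f φ
  haveI : q.IsHomLift ((G ⋙ q).map φ) (G.map φ) :=
    inferInstanceAs (q.IsHomLift (q.map (G.map φ)) (G.map φ))
  constructor
  intro z g ψ hψ
  haveI := hc z
  have hψq : (G ⋙ q).map φ ≫ g = q.map ψ := eq_of_isHomLift q _ ψ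
  have hGψ' : G.map (adj.homEquiv x z ψ) ≫ adj.counit.app z = ψ :=
    map_homEquiv_comp_counit G adj ψ
  set u := q.map (adj.counit.app z) with hu
  set ψ' := adj.homEquiv x z ψ with hψ'def
  have hmapψ' : (G ⋙ q).map ψ' = (G ⋙ q).map φ ≫ (g ≫ inv u) := by
    have h2 : q.map (G.map ψ') ≫ u = (G ⋙ q).map φ ≫ g := by
      rw [hu, ← q.map_comp, hGψ', hψq]
    simp only [Functor.comp_map] at h2 ⊢
    rw [← assoc, ← h2]
    simp
  haveI : (G ⋙ q).IsHomLift ((G ⋙ q).map φ ≫ (g ≫ inv u)) ψ' := by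
    rw [← hmapψ']; infer_instance
  set χ' := IsStronglyCocartesian.map (G ⋙ q) ((G ⋙ q).map φ) φ
    (f' := (G ⋙ q).map φ ≫ (g ≫ inv u)) rfl ψ' with hχ'def
  have hfac : φ ≫ χ' = ψ' := IsStronglyCocartesian.fac (G ⋙ q) ((G ⋙ q).map φ) φ rfl ψ'
  haveI : (G ⋙ q).IsHomLift (g ≫ inv u) χ' :=
    IsStronglyCocartesian.map_isHomLift (G ⋙ q) ((G ⋙ q).map φ) φ rfl ψ'
  have h1 : g ≫ inv u = (G ⋙ q).map χ' := eq_of_isHomLift (G ⋙ q) (g ≫ inv u) χ'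
  refine ⟨G.map χ' ≫ adj.counit.app z, ⟨?_, ?_⟩, ?_⟩
  · have hg : q.map (G.map χ' ≫ adj.counit.app z) = g := by
      rw [q.map_comp, ← Functor.comp_map, ← h1, ← hu]
      simp
    rw [← hg]; infer_instance
  · rw [← assoc, ← G.map_comp, hfac, hGψ']
  · rintro χ₂ ⟨hl₂, hc₂⟩
    have hGχ₂' : G.map (adj.homEquiv y z χ₂) ≫ adj.counit.app z = χ₂ :=
      map_homEquiv_comp_counit G adj χ₂
    set χ₂' := adj.homEquiv y z χ₂ with hχ₂'def
    have e1 : φ ≫ χ₂' = ψ' := by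
      rw [hψ'def, ← hc₂, Adjunction.homEquiv_naturality_left, hχ₂'def]
    have hgq : g = q.map χ₂ := eq_of_isHomLift q g χ₂
    haveI : (G ⋙ q).IsHomLift (g ≫ inv u) χ₂' := by
      have h3 : (G ⋙ q).map χ₂' = g ≫ inv u := by
        have h2 : q.map (G.map χ₂') ≫ u = q.map χ₂ := by rw [hu, ← q.map_comp, hGχ₂']
        simp only [Functor.comp_map]
        rw [hgq, ← h2]
        simp
      rw [← h3]; infer_instance
    have h4 : χ₂' = χ' := by
      rw [hχ'def]
      exact IsStronglyCocartesian.map_uniq (G ⋙ q) ((G ⋙ q).map φ)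
        φ (f' := (G ⋙ q).map φ ≫ (g ≫ inv u)) rfl ψ' χ₂' e1
    rw [← hGχ₂', h4]

lemma fiberwise_of_global (hG' : G ⋙ q = G ⋙ q) (R : D ⥤ E) (adj : G ⊣ R)
    (hc : ∀ d : D, IsIso (q.map (adj.counit.app d)))
    (hp : ∀ (x : E) (b : B) (f : (G ⋙ q).obj x ⟶ b),
      ∃ (y : E) (φ : x ⟶ y), (G ⋙ q).IsStronglyCocartesian f φ)
    (b : B) : (fiberFunctorOfEq G hG' b).IsLeftAdjoint := by
  classical
  choose w ρ hρ using fun (dd : q.Fiber b) =>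
    hp (R.obj dd.1) b (q.map (adj.counit.app dd.1) ≫ eqToHom dd.2)
  haveI := hρ
  haveI hiso : ∀ dd : q.Fiber b, IsIso (ρ dd) := by
    intro dd
    haveI := hc dd.1
    exact IsStronglyCocartesian.isIso_of_base_isIso (G ⋙ q)
      (q.map (adj.counit.app dd.1) ≫ eqToHom dd.2) (ρ dd)
  have hκ : ∀ dd : q.Fiber b,
      q.IsHomLift (𝟙 b) (G.map (inv (ρ dd)) ≫ adj.counit.app dd.1) := by
    intro dd
    haveI := hc dd.1
    haveI : (G ⋙ q).IsHomLift (inv (q.map (adj.counit.app dd.1) ≫ eqToHom dd.2)) (inv (ρ dd)) :=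
      inferInstance
    haveI : q.IsHomLift (inv (q.map (adj.counit.app dd.1) ≫ eqToHom dd.2)) (G.map (inv (ρ dd))) :=
      isHomLift_map q G _ _
    have hbe : inv (q.map (adj.counit.app dd.1) ≫ eqToHom dd.2) ≫ q.map (adj.counit.app dd.1)
        = 𝟙 b ≫ eqToHom dd.2.symm := by simp
    have hl : q.IsHomLift (𝟙 b ≫ eqToHom dd.2.symm)
        (G.map (inv (ρ dd)) ≫ adj.counit.app dd.1) := by
      rw [← hbe]; infer_instance
    exact (lift_comp_eqToHom_iff q (𝟙 b) _ dd.2.symm).mp hl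
  refine ⟨_, ⟨tAdj (fiberFunctorOfEq G hG' b)
      (fun dd => Fiber.mk (codomain_eq (G ⋙ q) (q.map (adj.counit.app dd.1) ≫ eqToHom dd.2) (ρ dd)))
      (fun dd => ⟨G.map (CategoryTheory.inv (ρ dd) (I := hiso dd)) ≫ adj.counit.app dd.1, hκ dd⟩)
      ?_⟩⟩
  intro X dd
  constructor
  · intro σ₁ σ₂ h
    have h1 : G.map σ₁.1 ≫ G.map (CategoryTheory.inv (ρ dd) (I := hiso dd)) ≫ adj.counit.app dd.1
        = G.map σ₂.1 ≫ G.map (CategoryTheory.inv (ρ dd) (I := hiso dd)) ≫ adj.counit.app dd.1 := congrArg Subtype.val h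
    rw [← assoc, ← assoc, ← G.map_comp, ← G.map_comp] at h1
    have h2 : σ₁.1 ≫ CategoryTheory.inv (ρ dd) (I := hiso dd) = σ₂.1 ≫ CategoryTheory.inv (ρ dd) (I := hiso dd) := by
      apply (adj.homEquiv X.1 dd.1).symm.injective
      rw [adj.homEquiv_counit, adj.homEquiv_counit]
      exact h1
    exact Fiber.hom_ext ((cancel_mono (inv (ρ dd))).mp h2)
  · intro tt
    haveI := tt.2
    have hχ : G.map (adj.homEquiv X.1 dd.1 tt.1) ≫ adj.counit.app dd.1 = tt.1 :=
      map_homEquiv_comp_counit G adj tt.1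
    have hlσ : (G ⋙ q).IsHomLift (𝟙 b) (adj.homEquiv X.1 dd.1 tt.1 ≫ ρ dd) := by
      refine of_commsq (G ⋙ q) (𝟙 b) _ X.2
        (codomain_eq (G ⋙ q) (q.map (adj.counit.app dd.1) ≫ eqToHom dd.2) (ρ dd)) ?_
      rw [Functor.map_comp, assoc]
      have h5 := (commSq (G ⋙ q) (q.map (adj.counit.app dd.1) ≫ eqToHom dd.2) (ρ dd)).w
      rw [h5]
      have h6 := (commSq q (𝟙 b) tt.1).w
      have h7 : (G ⋙ q).map (adj.homEquiv X.1 dd.1 tt.1) ≫ q.map (adj.counit.app dd.1)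
          = q.map tt.1 := by
        simp only [Functor.comp_map]
        rw [← q.map_comp, hχ]
        rfl
      simp only [comp_obj, id_obj, eqToHom_refl, id_comp]
      rw [← assoc, h7]
      erw [h6]
      rfl
    refine ⟨⟨adj.homEquiv X.1 dd.1 tt.1 ≫ ρ dd, hlσ⟩, ?_⟩
    apply Fiber.hom_ext
    show G.map (adj.homEquiv X.1 dd.1 tt.1 ≫ ρ dd) ≫ G.map (inv (ρ dd)) ≫ adj.counit.app dd.1
      = tt.1
    rw [G.map_comp, assoc, ← G.map_comp_assoc (ρ dd) (CategoryTheory.inv (ρ dd)),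
      IsIso.hom_inv_id, G.map_id, id_comp, hχ]

variable (hG' : G ⋙ q = G ⋙ q)

/-- Object part of the candidate right adjoint. -/
noncomputable def Gobj (hfib : ∀ b : B, (fiberFunctorOfEq G hG' b).IsLeftAdjoint) (d : D) : E :=
  haveI := hfib (q.obj d)
  ((fiberFunctorOfEq G hG' (q.obj d)).rightAdjoint.obj ⟨d, rfl⟩).1

/-- The candidate counit. -/
noncomputable def epsf (hfib : ∀ b : B, (fiberFunctorOfEq G hG' b).IsLeftAdjoint) (d : D) :
    G.obj (Gobj q G hG' hfib d) ⟶ d :=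
  haveI := hfib (q.obj d)
  ((Adjunction.ofIsLeftAdjoint (fiberFunctorOfEq G hG' (q.obj d))).counit.app ⟨d, rfl⟩).1

lemma epsf_lift (hfib : ∀ b : B, (fiberFunctorOfEq G hG' b).IsLeftAdjoint) (d : D) :
    q.IsHomLift (𝟙 (q.obj d)) (epsf q G hG' hfib d) :=
  haveI := hfib (q.obj d)
  ((Adjunction.ofIsLeftAdjoint (fiberFunctorOfEq G hG' (q.obj d))).counit.app ⟨d, rfl⟩).2

lemma Gobj_over (hfib : ∀ b : B, (fiberFunctorOfEq G hG' b).IsLeftAdjoint) (d : D) :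
    (G ⋙ q).obj (Gobj q G hG' hfib d) = q.obj d :=
  haveI := hfib (q.obj d)
  ((fiberFunctorOfEq G hG' (q.obj d)).rightAdjoint.obj ⟨d, rfl⟩).2

lemma tbij
    (hp : ∀ (x : E) (b : B) (f : (G ⋙ q).obj x ⟶ b),
      ∃ (y : E) (φ : x ⟶ y), (G ⋙ q).IsStronglyCocartesian f φ)
    (hcoc : ∀ {x y : E} {a b : B} (f : a ⟶ b) (φ : x ⟶ y),
      (G ⋙ q).IsStronglyCocartesian f φ → q.IsStronglyCocartesian f (G.map φ))
    (hfib : ∀ b : B, (fiberFunctorOfEq G hG' b).IsLeftAdjoint) (x : E) (d : D) :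
    Function.Bijective
      (fun χ : x ⟶ Gobj q G hG' hfib d => G.map χ ≫ epsf q G hG' hfib d) := by
  classical
  haveI := hfib (q.obj d)
  haveI := epsf_lift q G hG' hfib d
  constructor
  · intro χ₁ χ₂ h
    simp only at h
    haveI : IsIso (q.map (epsf q G hG' hfib d)) := by
      rw [fac' q (𝟙 (q.obj d)) (epsf q G hG' hfib d)]
      infer_instance
    have hbase : (G ⋙ q).map χ₁ = (G ⋙ q).map χ₂ := by
      have h2 := congrArg q.map h
      rw [q.map_comp, q.map_comp] at h2
      simp only [Functor.comp_map]
      exact (cancel_mono (q.map (epsf q G hG' hfib d))).mp h2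
    obtain ⟨x', φ, hφ⟩ := hp x (q.obj d) ((G ⋙ q).map χ₁ ≫ eqToHom (Gobj_over q G hG' hfib d))
    haveI := hφ
    haveI := hcoc ((G ⋙ q).map χ₁ ≫ eqToHom (Gobj_over q G hG' hfib d)) φ hφ
    haveI hl₁ : (G ⋙ q).IsHomLift ((G ⋙ q).map χ₁ ≫ eqToHom (Gobj_over q G hG' hfib d)) χ₁ :=
      inferInstance
    haveI hl₂ : (G ⋙ q).IsHomLift ((G ⋙ q).map χ₁ ≫ eqToHom (Gobj_over q G hG' hfib d)) χ₂ := by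
      rw [hbase]; infer_instance
    set g := (G ⋙ q).map χ₁ ≫ eqToHom (Gobj_over q G hG' hfib d) with hgdef
    set χ₁' := IsStronglyCocartesian.map (G ⋙ q) g φ (f' := g) (comp_id g).symm χ₁ with hχ₁'def
    set χ₂' := IsStronglyCocartesian.map (G ⋙ q) g φ (f' := g) (comp_id g).symm χ₂ with hχ₂'def
    have hfac₁ : φ ≫ χ₁' = χ₁ := IsStronglyCocartesian.fac (G ⋙ q) g φ (comp_id g).symm χ₁
    have hfac₂ : φ ≫ χ₂' = χ₂ := IsStronglyCocartesian.fac (G ⋙ q) g φ (comp_id g).symm χ₂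
    haveI : (G ⋙ q).IsHomLift (𝟙 (q.obj d)) χ₁' :=
      IsStronglyCocartesian.map_isHomLift (G ⋙ q) g φ (comp_id g).symm χ₁
    haveI : (G ⋙ q).IsHomLift (𝟙 (q.obj d)) χ₂' :=
      IsStronglyCocartesian.map_isHomLift (G ⋙ q) g φ (comp_id g).symm χ₂
    set adjb := Adjunction.ofIsLeftAdjoint (fiberFunctorOfEq G hG' (q.obj d)) with hadjb
    set Xf : Fiber (G ⋙ q) (q.obj d) := Fiber.mk (codomain_eq (G ⋙ q) g φ) with hXf
    set dhat : q.Fiber (q.obj d) := ⟨d, rfl⟩ with hdhat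
    set σ₁ : Xf ⟶ (fiberFunctorOfEq G hG' (q.obj d)).rightAdjoint.obj dhat :=
      ⟨χ₁', by assumption⟩ with hσ₁
    set σ₂ : Xf ⟶ (fiberFunctorOfEq G hG' (q.obj d)).rightAdjoint.obj dhat :=
      ⟨χ₂', by assumption⟩ with hσ₂
    have hτ₁ : ((adjb.homEquiv Xf dhat).symm σ₁).1 = G.map χ₁' ≫ epsf q G hG' hfib d :=
      congrArg Subtype.val (adjb.homEquiv_counit (X := Xf) (Y := dhat) (g := σ₁))
    have hτ₂ : ((adjb.homEquiv Xf dhat).symm σ₂).1 = G.map χ₂' ≫ epsf q G hG' hfib d :=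
      congrArg Subtype.val (adjb.homEquiv_counit (X := Xf) (Y := dhat) (g := σ₂))
    haveI : q.IsHomLift (𝟙 (q.obj d)) (((adjb.homEquiv Xf dhat).symm σ₁).1) :=
      ((adjb.homEquiv Xf dhat).symm σ₁).2
    haveI : q.IsHomLift (𝟙 (q.obj d)) (((adjb.homEquiv Xf dhat).symm σ₂).1) :=
      ((adjb.homEquiv Xf dhat).symm σ₂).2
    have key : ((adjb.homEquiv Xf dhat).symm σ₁).1 = ((adjb.homEquiv Xf dhat).symm σ₂).1 := by
      apply @IsStronglyCocartesian.ext _ _ _ _ q _ _ _ _ g (G.map φ) _ _ _ (𝟙 (q.obj d)) _ _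
        ((adjb.homEquiv Xf dhat).symm σ₁).2 ((adjb.homEquiv Xf dhat).symm σ₂).2
      rw [hτ₁, hτ₂, ← assoc, ← assoc, ← G.map_comp, ← G.map_comp, hfac₁, hfac₂]
      exact h
    have hσeq : σ₁ = σ₂ := (adjb.homEquiv Xf dhat).symm.injective (Subtype.ext key)
    have : χ₁' = χ₂' := congrArg Subtype.val hσeq
    rw [← hfac₁, ← hfac₂, this]
  · intro ψ
    obtain ⟨x', φ, hφ⟩ := hp x (q.obj d) (q.map ψ)
    haveI := hφ
    haveI := hcoc (q.map ψ : (G ⋙ q).obj x ⟶ q.obj d) φ hφ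
    haveI : q.IsHomLift (q.map ψ : (G ⋙ q).obj x ⟶ q.obj d) ψ :=
      inferInstanceAs (q.IsHomLift (q.map ψ) ψ)
    set τ := IsStronglyCocartesian.map q (q.map ψ : (G ⋙ q).obj x ⟶ q.obj d) (G.map φ)
      (f' := (q.map ψ : (G ⋙ q).obj x ⟶ q.obj d)) (comp_id _).symm ψ with hτdef
    have hfacτ : G.map φ ≫ τ = ψ :=
      IsStronglyCocartesian.fac q (q.map ψ : (G ⋙ q).obj x ⟶ q.obj d) (G.map φ) (comp_id _).symm ψ
    haveI : q.IsHomLift (𝟙 (q.obj d)) τ :=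
      IsStronglyCocartesian.map_isHomLift q (q.map ψ : (G ⋙ q).obj x ⟶ q.obj d) (G.map φ)
        (comp_id _).symm ψ
    set adjb := Adjunction.ofIsLeftAdjoint (fiberFunctorOfEq G hG' (q.obj d)) with hadjb
    set Xf : Fiber (G ⋙ q) (q.obj d) :=
      Fiber.mk (codomain_eq (G ⋙ q) (q.map ψ : (G ⋙ q).obj x ⟶ q.obj d) φ) with hXf
    set dhat : q.Fiber (q.obj d) := ⟨d, rfl⟩ with hdhat
    set that : (fiberFunctorOfEq G hG' (q.obj d)).obj Xf ⟶ dhat := ⟨τ, by assumption⟩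
      with hthat
    set σ := adjb.homEquiv Xf dhat that with hσdef
    refine ⟨φ ≫ σ.1, ?_⟩
    have h1 := adjb.homEquiv_counit (X := Xf) (Y := dhat) (g := σ)
    rw [hσdef, Equiv.symm_apply_apply] at h1
    have h2 : τ = G.map σ.1 ≫ epsf q G hG' hfib d := congrArg Subtype.val h1
    show G.map (φ ≫ σ.1) ≫ epsf q G hG' hfib d = ψ
    erw [G.map_comp, assoc, ← h2, hfacτ]

lemma global_of_fiberwise
    (hp : ∀ (x : E) (b : B) (f : (G ⋙ q).obj x ⟶ b),
      ∃ (y : E) (φ : x ⟶ y), (G ⋙ q).IsStronglyCocartesian f φ)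
    (hcoc : ∀ {x y : E} {a b : B} (f : a ⟶ b) (φ : x ⟶ y),
      (G ⋙ q).IsStronglyCocartesian f φ → q.IsStronglyCocartesian f (G.map φ))
    (hfib : ∀ b : B, (fiberFunctorOfEq G hG' b).IsLeftAdjoint) :
    ∃ (R : D ⥤ E) (adj : G ⊣ R), ∀ d : D, IsIso (q.map (adj.counit.app d)) := by
  refine ⟨_, tAdj G (Gobj q G hG' hfib) (epsf q G hG' hfib)
      (tbij q G hG' hp hcoc hfib), ?_⟩
  intro d
  rw [tAdj_counit]
  haveI := epsf_lift q G hG' hfib d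
  rw [fac' q (𝟙 (q.obj d)) (epsf q G hG' hfib d)]
  infer_instance

end RelAdjAux

open RelAdjAux in
/-- Let `p : E ⥤ B` and `q : D ⥤ B` be Grothendieck opfibrations, and let `G : E ⥤ D` be a
functor with `G ⋙ q = p`.  Then `G` admits a right adjoint `R` whose counit components are
sent by `q` to isomorphisms if and only if `G` sends strongly cocartesian morphisms to
strongly cocartesian morphisms and, for every `b : B`, the induced functor on fibers
`E_b ⥤ D_b` admits a right adjoint. -/
theorem relative_right_adjoint_iff_fiberwise_and_cocartesian
    (p : E ⥤ B) (q : D ⥤ B) (G : E ⥤ D) (hG : G ⋙ q = p)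
    (hp : ∀ (x : E) (b : B) (f : p.obj x ⟶ b),
      ∃ (y : E) (φ : x ⟶ y), p.IsStronglyCocartesian f φ)
    (hq : ∀ (x : D) (b : B) (f : q.obj x ⟶ b),
      ∃ (y : D) (φ : x ⟶ y), q.IsStronglyCocartesian f φ) :
    (∃ (R : D ⥤ E) (adj : G ⊣ R), ∀ d : D, IsIso (q.map (adj.counit.app d))) ↔
      ((∀ {x y : E} {a b : B} (f : a ⟶ b) (φ : x ⟶ y),
          p.IsStronglyCocartesian f φ → q.IsStronglyCocartesian f (G.map φ)) ∧
        ∀ b : B, (fiberFunctorOfEq G hG b).IsLeftAdjoint) := by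
  subst hG
  constructor
  · rintro ⟨R, adj, hc⟩
    exact ⟨fun f φ h => preserves_scc q G R adj hc f φ h,
      fun b => fiberwise_of_global q G rfl R adj hc hp b⟩
  · rintro ⟨hcoc, hfib⟩
    exact global_of_fiberwise q G rfl hp (fun f φ h => hcoc f φ h) hfib
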